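/- arXiv:1912.11864 — 4 statements merged into one kernel-verified Lean document; each statement's English description precedes it below -/
import Mathlib

section
/- Let k ≥ 1 and let φ be a nondegenerate monotone Boolean function on V = {0,...,k}. Then for every real number t: Σ_{ν ∈ sat(φ)} t^{|ν|}·(1−t)^{(k+1)−|ν|} = Σ_{x ∈ L_CNF^φ} μ_CNF(x, 1̂)·(1−t)^{|x|} = 1 − Σ_{x ∈ L_DNF^φ} μ_DNF(x, 1̂)·t^{|x|}. (The left-hand side is the probability Pr(φ, π_t) of φ under the assignment giving each variable independent probability t.) -/
open scoped Classical

/-- Flip the membership of variable `l` in valuation `ν`. -/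
def flipV {k : ℕ} (ν : Finset (Fin (k + 1))) (l : Fin (k + 1)) : Finset (Fin (k + 1)) :=
  if l ∈ ν then ν.erase l else insert l ν

/-- The set of satisfying valuations of a Boolean function on `V = {0,...,k}`. -/
def satSet {k : ℕ} (φ : Finset (Fin (k + 1)) → Bool) : Finset (Finset (Fin (k + 1))) :=
  Finset.univ.filter (fun ν => φ ν = true)

/-- The Euler characteristic of a Boolean function: `Σ_{ν ⊨ φ} (-1)^{|ν|}`. -/
def eul {k : ℕ} (φ : Finset (Fin (k + 1)) → Bool) : ℤ :=
  ∑ ν ∈ satSet φ, (-1 : ℤ) ^ ν.card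

/-- A Boolean function is monotone if enlarging a satisfying valuation keeps it satisfying. -/
def MonotoneBF {k : ℕ} (φ : Finset (Fin (k + 1)) → Bool) : Prop :=
  ∀ ν ν' : Finset (Fin (k + 1)), ν ⊆ ν' → φ ν = true → φ ν' = true

/-- A Boolean function is nondegenerate if it depends on every variable of `V`. -/
def Nondegenerate (k : ℕ) (φ : Finset (Fin (k + 1)) → Bool) : Prop :=
  ∀ l : Fin (k + 1), ∃ ν, φ ν ≠ φ (flipV ν l)

/-- `C` is an implicate of `φ`: every satisfying valuation of `φ` intersects `C`. -/
def IsImplicate {k : ℕ} (φ : Finset (Fin (k + 1)) → Bool) (C : Finset (Fin (k + 1))) : Prop :=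
  ∀ ν, φ ν = true → (ν ∩ C).Nonempty

/-- `C` is a prime implicate of `φ`: a minimal implicate. For a nondegenerate monotone
function these are the clauses `C_0, ..., C_n` of its unique minimized CNF. -/
def IsPrimeImplicate {k : ℕ} (φ : Finset (Fin (k + 1)) → Bool)
    (C : Finset (Fin (k + 1))) : Prop :=
  IsImplicate φ C ∧ ∀ C', C' ⊂ C → ¬ IsImplicate φ C'

/-- `C` is a prime implicant of `φ`: a minimal satisfying valuation. For a nondegenerate
monotone function these are the clauses of its unique minimized DNF. -/
def IsPrimeImplicant {k : ℕ} (φ : Finset (Fin (k + 1)) → Bool)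
    (C : Finset (Fin (k + 1))) : Prop :=
  φ C = true ∧ ∀ C', C' ⊂ C → φ C' = false

/-- The elements of the CNF lattice `L_CNF^φ`: the unions `d_s = ⋃_{i ∈ s} C_i` of sets of
prime implicates of `φ`, ordered by reverse set inclusion. Its greatest element `1̂` is `∅`. -/
noncomputable def cnfLattice {k : ℕ} (φ : Finset (Fin (k + 1)) → Bool) :
    Finset (Finset (Fin (k + 1))) :=
  Finset.univ.filter (fun d => ∃ S : Finset (Finset (Fin (k + 1))),
    (∀ C ∈ S, IsPrimeImplicate φ C) ∧ d = S.sup id)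

/-- The elements of the DNF lattice `L_DNF^φ`: the unions of sets of prime implicants of `φ`,
ordered by reverse set inclusion. Its greatest element `1̂` is `∅`. -/
noncomputable def dnfLattice {k : ℕ} (φ : Finset (Fin (k + 1)) → Bool) :
    Finset (Finset (Fin (k + 1))) :=
  Finset.univ.filter (fun d => ∃ S : Finset (Finset (Fin (k + 1))),
    (∀ C ∈ S, IsPrimeImplicant φ C) ∧ d = S.sup id)

/-- The Möbius function of the poset whose elements are the members of `L`, ordered by
reverse set inclusion: `mobiusRev L v u = μ(u, v)` for `u ≤ v` (i.e. `v ⊆ u`), defined by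
`μ(u,u) = 1` and `μ(u,v) = -∑_{u < w ≤ v} μ(w,v)`, the sum ranging over the elements `w`
of `L` with `u < w ≤ v` (i.e. `v ⊆ w ⊊ u`). -/
noncomputable def mobiusRev {k : ℕ} (L : Finset (Finset (Fin (k + 1))))
    (v : Finset (Fin (k + 1))) (u : Finset (Fin (k + 1))) : ℤ :=
  if u = v then 1
  else - ∑ w ∈ (L.filter (fun w => v ⊆ w ∧ w ⊂ u)).attach, mobiusRev L v w.1
termination_by u.card
decreasing_by
  have hw := w.2
  simp only [Finset.mem_filter] at hw
  exact Finset.card_lt_card hw.2.2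

section Aux

open Finset

variable {k : ℕ}

/-- unions of subfamilies -/
noncomputable def unionsOf {k : ℕ} (A : Finset (Finset (Fin (k + 1)))) :
    Finset (Finset (Fin (k + 1))) :=
  A.powerset.image (fun s => s.sup id)

/-- crosscut coefficient -/
noncomputable def mSum {k : ℕ} (A : Finset (Finset (Fin (k + 1))))
    (x : Finset (Fin (k + 1))) : ℤ :=
  ∑ s ∈ A.powerset.filter (fun s => s.sup id = x), (-1 : ℤ) ^ s.card

lemma empty_mem_unionsOf (A : Finset (Finset (Fin (k + 1)))) : ∅ ∈ unionsOf A := by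
  simp only [unionsOf, mem_image]
  exact ⟨∅, by simp⟩

lemma binom_sum (t : ℝ) (S : Finset (Fin (k + 1))) :
    ∑ ν ∈ S.powerset, t ^ ν.card * (1 - t) ^ (S.card - ν.card) = 1 := by
  have h := Finset.prod_add (fun _ : Fin (k + 1) => t) (fun _ => (1 - t)) S
  simp only [Finset.prod_const] at h
  have h1 : (t + (1 - t)) = 1 := by ring
  rw [h1, one_pow] at h
  refine Eq.trans (Finset.sum_congr rfl fun ν hν => ?_) h.symm
  rw [card_sdiff_of_subset (mem_powerset.mp hν)]

lemma sumW_disjoint (t : ℝ) (x : Finset (Fin (k + 1))) :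
    ∑ ν ∈ Finset.univ.filter (fun ν => ν ∩ x = ∅),
      t ^ ν.card * (1 - t) ^ (k + 1 - ν.card) = (1 - t) ^ x.card := by
  have hset : Finset.univ.filter (fun ν : Finset (Fin (k + 1)) => ν ∩ x = ∅) = xᶜ.powerset := by
    ext ν
    simp only [mem_filter, mem_univ, true_and, mem_powerset]
    constructor
    · intro h a ha
      simp only [mem_compl]
      intro hax
      have : a ∈ ν ∩ x := mem_inter.mpr ⟨ha, hax⟩
      simp [h] at this
    · intro h
      ext a
      simp only [mem_inter, notMem_empty, iff_false]
      rintro ⟨ha, hax⟩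
      have := h ha
      simp [mem_compl, hax] at this
  rw [hset]
  have hcard : xᶜ.card = k + 1 - x.card := by
    rw [card_compl, Fintype.card_fin]
  have key : ∀ ν ∈ xᶜ.powerset,
      t ^ ν.card * (1 - t) ^ (k + 1 - ν.card)
        = (1 - t) ^ x.card * (t ^ ν.card * (1 - t) ^ (xᶜ.card - ν.card)) := by
    intro ν hν
    have hle : ν.card ≤ xᶜ.card := card_le_card (mem_powerset.mp hν)
    have hxle : x.card ≤ k + 1 := by
      simpa using card_le_card (subset_univ x)
    have : k + 1 - ν.card = x.card + (xᶜ.card - ν.card) := by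
      omega
    rw [this, pow_add]
    ring
  rw [Finset.sum_congr rfl key, ← Finset.mul_sum, binom_sum, mul_one]

lemma sumW_superset (t : ℝ) (x : Finset (Fin (k + 1))) :
    ∑ ν ∈ Finset.univ.filter (fun ν => x ⊆ ν),
      t ^ ν.card * (1 - t) ^ (k + 1 - ν.card) = t ^ x.card := by
  have hcard : xᶜ.card = k + 1 - x.card := by
    rw [card_compl, Fintype.card_fin]
  have hxle : x.card ≤ k + 1 := by simpa using card_le_card (subset_univ x)
  have key : ∑ ν ∈ Finset.univ.filter (fun ν => x ⊆ ν),
      t ^ ν.card * (1 - t) ^ (k + 1 - ν.card)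
      = ∑ s ∈ xᶜ.powerset, t ^ x.card * (t ^ s.card * (1 - t) ^ (xᶜ.card - s.card)) := by
    refine Finset.sum_nbij' (fun ν => ν \ x) (fun s => s ∪ x) ?_ ?_ ?_ ?_ ?_
    · intro ν hν
      simp only [mem_filter, mem_univ, true_and] at hν
      simp only [mem_powerset]
      intro a ha
      simp only [mem_sdiff] at ha
      simp [mem_compl, ha.2]
    · intro s hs
      simp only [mem_powerset] at hs
      simp only [mem_filter, mem_univ, true_and]
      exact subset_union_right
    · intro ν hν
      simp only [mem_filter, mem_univ, true_and] at hν
      exact sdiff_union_of_subset hν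
    · intro s hs
      simp only [mem_powerset] at hs
      ext a
      simp only [mem_sdiff, mem_union]
      constructor
      · rintro ⟨h | h, hax⟩
        · exact h
        · exact absurd h hax
      · intro ha
        have := hs ha
        simp only [mem_compl] at this
        exact ⟨Or.inl ha, this⟩
    · intro ν hν
      simp only [mem_filter, mem_univ, true_and] at hν
      have h1 : ν.card = x.card + (ν \ x).card := by
        rw [card_sdiff_of_subset hν]
        have := card_le_card hν
        omega
      have hsub : ν \ x ⊆ xᶜ := by
        intro a ha
        simp only [mem_sdiff] at ha
        simp [mem_compl, ha.2]
      have h2 : k + 1 - (x.card + (ν \ x).card) = xᶜ.card - (ν \ x).card := by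
        have := card_le_card hsub
        omega
      beta_reduce
      rw [h1, h2, pow_add]
      ring
  rw [key, ← Finset.mul_sum, binom_sum, mul_one]

end Aux

section Logic

open Finset

variable {k : ℕ} {φ : Finset (Fin (k + 1)) → Bool}

lemma exists_prime_implicate_subset :
    ∀ C : Finset (Fin (k + 1)), IsImplicate φ C → ∃ C' ⊆ C, IsPrimeImplicate φ C' := by
  intro C
  induction C using Finset.strongInduction with
  | _ C ih =>
    intro hC
    by_cases h : ∀ C', C' ⊂ C → ¬ IsImplicate φ C'
    · exact ⟨C, Finset.Subset.refl C, hC, h⟩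
    · push_neg at h
      obtain ⟨C', hC'sub, hC'⟩ := h
      obtain ⟨C'', h1, h2⟩ := ih C' hC'sub hC'
      exact ⟨C'', h1.trans hC'sub.subset, h2⟩

lemma exists_prime_implicant_subset :
    ∀ ν : Finset (Fin (k + 1)), φ ν = true → ∃ C ⊆ ν, IsPrimeImplicant φ C := by
  intro ν
  induction ν using Finset.strongInduction with
  | _ ν ih =>
    intro hν
    by_cases h : ∀ C', C' ⊂ ν → φ C' = false
    · exact ⟨ν, Finset.Subset.refl ν, hν, h⟩
    · push_neg at h
      obtain ⟨C', hC'sub, hC'⟩ := h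
      have hC't : φ C' = true := by
        cases hb : φ C' with
        | false => exact absurd hb hC'
        | true => rfl
      obtain ⟨C'', h1, h2⟩ := ih C' hC'sub hC't
      exact ⟨C'', h1.trans hC'sub.subset, h2⟩

lemma exists_true_of_nd (hnd : Nondegenerate k φ) : ∃ ν, φ ν = true := by
  obtain ⟨ν, hν⟩ := hnd 0
  cases hb : φ ν with
  | true => exact ⟨ν, hb⟩
  | false =>
    refine ⟨flipV ν 0, ?_⟩
    cases hb2 : φ (flipV ν 0) with
    | true => rfl
    | false => exact absurd (hb.trans hb2.symm) hν

lemma exists_false_of_nd (hnd : Nondegenerate k φ) : ∃ ν, φ ν = false := by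
  obtain ⟨ν, hν⟩ := hnd 0
  cases hb : φ ν with
  | false => exact ⟨ν, hb⟩
  | true =>
    refine ⟨flipV ν 0, ?_⟩
    cases hb2 : φ (flipV ν 0) with
    | false => rfl
    | true => exact absurd (hb.trans hb2.symm) hν

lemma empty_not_prime_implicate (hnd : Nondegenerate k φ) : ¬ IsPrimeImplicate φ ∅ := by
  rintro ⟨h1, -⟩
  obtain ⟨ν, hν⟩ := exists_true_of_nd hnd
  have := h1 ν hν
  simp at this

lemma empty_not_prime_implicant (hmono : MonotoneBF φ) (hnd : Nondegenerate k φ) :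
    ¬ IsPrimeImplicant φ ∅ := by
  rintro ⟨h1, -⟩
  obtain ⟨ν, hν⟩ := exists_false_of_nd hnd
  have := hmono ∅ ν (empty_subset ν) h1
  rw [this] at hν
  exact Bool.noConfusion hν

lemma phi_iff_implicates (hmono : MonotoneBF φ) (ν : Finset (Fin (k + 1))) :
    φ ν = true ↔ ∀ C, IsPrimeImplicate φ C → (ν ∩ C).Nonempty := by
  constructor
  · intro h C hC
    exact hC.1 ν h
  · intro h
    by_contra hfalse
    have himpl : IsImplicate φ νᶜ := by
      intro ν' hν'
      rw [Finset.nonempty_iff_ne_empty]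
      intro hempty
      have hsub : ν' ⊆ ν := by
        intro a ha
        by_contra hain
        have : a ∈ ν' ∩ νᶜ := mem_inter.mpr ⟨ha, mem_compl.mpr hain⟩
        rw [hempty] at this
        exact notMem_empty a this
      exact hfalse (hmono ν' ν hsub hν')
    obtain ⟨C', hsub, hprime⟩ := exists_prime_implicate_subset νᶜ himpl
    obtain ⟨a, ha⟩ := h C' hprime
    rw [mem_inter] at ha
    exact (mem_compl.mp (hsub ha.2)) ha.1

lemma phi_iff_implicants (hmono : MonotoneBF φ) (ν : Finset (Fin (k + 1))) :
    φ ν = true ↔ ∃ C, IsPrimeImplicant φ C ∧ C ⊆ ν := by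
  constructor
  · intro h
    obtain ⟨C, h1, h2⟩ := exists_prime_implicant_subset ν h
    exact ⟨C, h2, h1⟩
  · rintro ⟨C, hC, hsub⟩
    exact hmono C ν hsub hC.1

end Logic

section Crosscut

open Finset

variable {k : ℕ}

lemma powerset_filter_sup_subset (A : Finset (Finset (Fin (k + 1)))) (x : Finset (Fin (k + 1))) :
    A.powerset.filter (fun s => s.sup id ⊆ x) = (A.filter (fun C => C ⊆ x)).powerset := by
  ext s
  simp only [mem_filter, mem_powerset]
  constructor
  · rintro ⟨hs, hsup⟩
    intro C hC
    rw [mem_filter]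
    exact ⟨hs hC, (Finset.le_sup (f := id) hC).trans hsup⟩
  · intro hs
    constructor
    · intro C hC
      exact (mem_filter.mp (hs hC)).1
    · rw [← Finset.le_iff_subset]
      refine Finset.sup_le fun C hC => ?_
      exact Finset.le_iff_subset.mpr (mem_filter.mp (hs hC)).2

lemma filter_nonempty_of_mem_unionsOf {A : Finset (Finset (Fin (k + 1)))}
    {x : Finset (Fin (k + 1))} (hx : x ∈ unionsOf A) (hxe : x ≠ ∅) :
    (A.filter (fun C => C ⊆ x)).Nonempty := by
  simp only [unionsOf, mem_image, mem_powerset] at hx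
  obtain ⟨S, hS, hsup⟩ := hx
  have hSne : S.Nonempty := by
    rw [Finset.nonempty_iff_ne_empty]
    rintro rfl
    simp at hsup
    exact hxe hsup.symm
  obtain ⟨C, hC⟩ := hSne
  refine ⟨C, mem_filter.mpr ⟨hS hC, ?_⟩⟩
  rw [← hsup]
  exact Finset.le_sup (f := id) hC

lemma mobius_eq_mSum (A : Finset (Finset (Fin (k + 1)))) (hA : ∅ ∉ A) :
    ∀ x, x ∈ unionsOf A → mobiusRev (unionsOf A) ∅ x = mSum A x := by
  intro x
  induction x using Finset.strongInduction with
  | _ x ih =>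
    intro hx
    rw [mobiusRev]
    by_cases hxe : x = ∅
    · subst hxe
      rw [if_pos rfl, mSum]
      have hset : A.powerset.filter (fun s => s.sup id = (∅ : Finset (Fin (k + 1)))) = {∅} := by
        ext s
        simp only [mem_filter, mem_powerset, mem_singleton]
        constructor
        · rintro ⟨hs, hsup⟩
          rw [← Finset.subset_empty]
          intro C hC
          have hCsub : C ⊆ s.sup id := Finset.le_sup (f := id) hC
          rw [hsup, Finset.subset_empty] at hCsub
          exact absurd (hCsub ▸ hs hC) hA
        · rintro rfl
          simp
      rw [hset]
      simp
    · rw [if_neg hxe]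
      rw [Finset.sum_attach ((unionsOf A).filter (fun w => ∅ ⊆ w ∧ w ⊂ x))
        (fun w => mobiusRev (unionsOf A) ∅ w)]
      have hstep : ∑ w ∈ (unionsOf A).filter (fun w => ∅ ⊆ w ∧ w ⊂ x),
          mobiusRev (unionsOf A) ∅ w
          = ∑ w ∈ (unionsOf A).filter (fun w => ∅ ⊆ w ∧ w ⊂ x), mSum A w := by
        refine Finset.sum_congr rfl fun w hw => ?_
        simp only [mem_filter] at hw
        exact ih w hw.2.2 hw.1
      rw [hstep]
      have key : ∑ w ∈ (unionsOf A).filter (fun w => w ⊆ x), mSum A w = 0 := by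
        have hmaps : ∀ s ∈ A.powerset.filter (fun s => s.sup id ⊆ x),
            s.sup id ∈ (unionsOf A).filter (fun w => w ⊆ x) := by
          intro s hs
          simp only [mem_filter] at hs ⊢
          exact ⟨mem_image_of_mem _ hs.1, hs.2⟩
        have h1 := Finset.sum_fiberwise_of_maps_to hmaps (fun s => (-1 : ℤ) ^ s.card)
        have h2 : ∑ w ∈ (unionsOf A).filter (fun w => w ⊆ x), mSum A w
            = ∑ s ∈ A.powerset.filter (fun s => s.sup id ⊆ x), (-1 : ℤ) ^ s.card := by
          rw [← h1]
          refine Finset.sum_congr rfl fun w hw => ?_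
          simp only [mem_filter] at hw
          have hsets : A.powerset.filter (fun s => s.sup id = w)
              = (A.powerset.filter (fun s => s.sup id ⊆ x)).filter
                  (fun s => s.sup id = w) := by
            rw [Finset.filter_filter]
            ext s
            simp only [mem_filter]
            constructor
            · rintro ⟨hs, hsup⟩
              exact ⟨hs, hsup ▸ hw.2, hsup⟩
            · rintro ⟨hs, -, hsup⟩
              exact ⟨hs, hsup⟩
          rw [mSum, hsets]
        rw [h2, powerset_filter_sup_subset]
        exact sum_powerset_neg_one_pow_card_of_nonempty
          (filter_nonempty_of_mem_unionsOf hx hxe)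
      have hsplit : (unionsOf A).filter (fun w => w ⊆ x)
          = insert x ((unionsOf A).filter (fun w => ∅ ⊆ w ∧ w ⊂ x)) := by
        ext w
        simp only [mem_filter, mem_insert, empty_subset, true_and]
        constructor
        · rintro ⟨hw, hsub⟩
          rcases eq_or_ne w x with h | h
          · exact Or.inl h
          · exact Or.inr ⟨hw, Finset.ssubset_iff_subset_ne.mpr ⟨hsub, h⟩⟩
        · rintro (h | ⟨hw, hsub⟩)
          · subst h
            exact ⟨hx, subset_rfl⟩
          · exact ⟨hw, hsub.subset⟩
      rw [hsplit, Finset.sum_insert (fun hc => absurd (Finset.mem_filter.mp hc).2.2 (lt_irrefl x))] at key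
      omega

lemma mobius_weighted (A : Finset (Finset (Fin (k + 1)))) (hA : ∅ ∉ A)
    (g : Finset (Fin (k + 1)) → ℝ) :
    ∑ x ∈ unionsOf A, (mobiusRev (unionsOf A) ∅ x : ℝ) * g x
      = ∑ s ∈ A.powerset, (-1 : ℝ) ^ s.card * g (s.sup id) := by
  have hmaps : ∀ s ∈ A.powerset, s.sup id ∈ unionsOf A := fun s hs =>
    mem_image_of_mem _ hs
  rw [← Finset.sum_fiberwise_of_maps_to hmaps (fun s => (-1 : ℝ) ^ s.card * g (s.sup id))]
  refine Finset.sum_congr rfl fun x hx => ?_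
  rw [mobius_eq_mSum A hA x hx, mSum]
  push_cast
  rw [Finset.sum_mul]
  refine Finset.sum_congr rfl fun s hs => ?_
  simp only [mem_filter] at hs
  rw [hs.2]

end Crosscut

section Main

open Finset

variable {k : ℕ}

lemma sumW_all (t : ℝ) :
    ∑ ν : Finset (Fin (k + 1)), t ^ ν.card * (1 - t) ^ (k + 1 - ν.card) = 1 := by
  have h := binom_sum t (Finset.univ : Finset (Fin (k + 1)))
  rw [Finset.powerset_univ] at h
  simpa using h

lemma sum_powerset_neg_one_real (B : Finset (Finset (Fin (k + 1)))) :
    ∑ s ∈ B.powerset, (-1 : ℝ) ^ s.card = if B = ∅ then 1 else 0 := by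
  have h := Finset.sum_powerset_neg_one_pow_card (x := B)
  have h2 : ((∑ s ∈ B.powerset, (-1 : ℤ) ^ s.card : ℤ) : ℝ)
      = ∑ s ∈ B.powerset, (-1 : ℝ) ^ s.card := by
    push_cast
    rfl
  rw [← h2, h]
  split <;> simp

lemma cnf_eq (φ : Finset (Fin (k + 1)) → Bool) :
    cnfLattice φ = unionsOf (Finset.univ.filter (fun C => IsPrimeImplicate φ C)) := by
  ext d
  simp only [cnfLattice, unionsOf, mem_filter, mem_univ, true_and, mem_image, mem_powerset]
  constructor
  · rintro ⟨S, hS, rfl⟩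
    exact ⟨S, fun C hC => mem_filter.mpr ⟨mem_univ C, hS C hC⟩, rfl⟩
  · rintro ⟨S, hS, rfl⟩
    exact ⟨S, fun C hC => (mem_filter.mp (hS hC)).2, rfl⟩

lemma dnf_eq (φ : Finset (Fin (k + 1)) → Bool) :
    dnfLattice φ = unionsOf (Finset.univ.filter (fun C => IsPrimeImplicant φ C)) := by
  ext d
  simp only [dnfLattice, unionsOf, mem_filter, mem_univ, true_and, mem_image, mem_powerset]
  constructor
  · rintro ⟨S, hS, rfl⟩
    exact ⟨S, fun C hC => mem_filter.mpr ⟨mem_univ C, hS C hC⟩, rfl⟩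
  · rintro ⟨S, hS, rfl⟩
    exact ⟨S, fun C hC => (mem_filter.mp (hS hC)).2, rfl⟩

lemma filter_disj_eq (A : Finset (Finset (Fin (k + 1)))) (ν : Finset (Fin (k + 1))) :
    A.powerset.filter (fun s => ν ∩ s.sup id = ∅)
      = (A.filter (fun C => ν ∩ C = ∅)).powerset := by
  have hiff : ∀ s : Finset (Finset (Fin (k + 1))),
      ν ∩ s.sup id = ∅ ↔ ∀ C ∈ s, ν ∩ C = ∅ := by
    intro s
    simp only [← Finset.disjoint_iff_inter_eq_empty]
    exact Finset.disjoint_sup_right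
  ext s
  simp only [mem_filter, mem_powerset, hiff]
  constructor
  · rintro ⟨hs, h⟩
    intro C hC
    exact mem_filter.mpr ⟨hs hC, h C hC⟩
  · intro hs
    exact ⟨fun C hC => (mem_filter.mp (hs hC)).1, fun C hC => (mem_filter.mp (hs hC)).2⟩

end Main

open Finset in
/-- for a nondegenerate monotone Boolean function `φ` on `V = {0,...,k}`
and any real `t`, the probability `Pr(φ, π_t) = Σ_{ν ⊨ φ} t^{|ν|} (1-t)^{(k+1)-|ν|}`
equals `Σ_{x ∈ L_CNF^φ} μ_CNF(x, 1̂) (1-t)^{|x|}` and equals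
`1 - Σ_{x ∈ L_DNF^φ} μ_DNF(x, 1̂) t^{|x|}`. -/
theorem stmt1 (k : ℕ) (hk : 1 ≤ k) (φ : Finset (Fin (k + 1)) → Bool)
    (hmono : MonotoneBF φ) (hnd : Nondegenerate k φ) (t : ℝ) :
    (∑ ν ∈ satSet φ, t ^ ν.card * (1 - t) ^ (k + 1 - ν.card)
        = ∑ x ∈ cnfLattice φ, (mobiusRev (cnfLattice φ) ∅ x : ℝ) * (1 - t) ^ x.card) ∧
    (∑ ν ∈ satSet φ, t ^ ν.card * (1 - t) ^ (k + 1 - ν.card)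
        = 1 - ∑ x ∈ dnfLattice φ, (mobiusRev (dnfLattice φ) ∅ x : ℝ) * t ^ x.card) := by
  have hLHS : ∑ ν ∈ satSet φ, t ^ ν.card * (1 - t) ^ (k + 1 - ν.card)
      = ∑ ν ∈ (Finset.univ : Finset (Finset (Fin (k + 1)))),
          (if φ ν = true then (1 : ℝ) else 0) * (t ^ ν.card * (1 - t) ^ (k + 1 - ν.card)) := by
    rw [satSet, Finset.sum_filter]
    refine Finset.sum_congr rfl fun ν _ => ?_
    split <;> simp
  constructor
  · -- CNF part
    have hA : (∅ : Finset (Fin (k + 1))) ∉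
        Finset.univ.filter (fun C => IsPrimeImplicate φ C) := by
      simp only [Finset.mem_filter]
      rintro ⟨-, h⟩
      exact empty_not_prime_implicate hnd h
    rw [cnf_eq φ, mobius_weighted _ hA (fun x => (1 - t) ^ x.card)]
    have step1 : ∀ s ∈ (Finset.univ.filter (fun C => IsPrimeImplicate φ C)).powerset,
        (-1 : ℝ) ^ s.card * (1 - t) ^ (s.sup id).card
        = ∑ ν ∈ (Finset.univ : Finset (Finset (Fin (k + 1)))),
            (if ν ∩ s.sup id = ∅ then
              (-1 : ℝ) ^ s.card * (t ^ ν.card * (1 - t) ^ (k + 1 - ν.card)) else 0) := by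
      intro s _
      rw [← sumW_disjoint t (s.sup id), Finset.mul_sum, Finset.sum_filter]
    rw [Finset.sum_congr rfl step1, Finset.sum_comm]
    have step2 : ∀ ν ∈ (Finset.univ : Finset (Finset (Fin (k + 1)))),
        ∑ s ∈ (Finset.univ.filter (fun C => IsPrimeImplicate φ C)).powerset,
            (if ν ∩ s.sup id = ∅ then
              (-1 : ℝ) ^ s.card * (t ^ ν.card * (1 - t) ^ (k + 1 - ν.card)) else 0)
        = (if φ ν = true then (1 : ℝ) else 0)
            * (t ^ ν.card * (1 - t) ^ (k + 1 - ν.card)) := by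
      intro ν _
      rw [← Finset.sum_filter, filter_disj_eq, ← Finset.sum_mul, sum_powerset_neg_one_real]
      congr 1
      have hiff : ((Finset.univ.filter (fun C => IsPrimeImplicate φ C)).filter
          (fun C => ν ∩ C = ∅) = ∅) ↔ φ ν = true := by
        rw [Finset.filter_eq_empty_iff, phi_iff_implicates hmono]
        constructor
        · intro h C hC
          rw [Finset.nonempty_iff_ne_empty]
          exact h (mem_filter.mpr ⟨mem_univ C, hC⟩)
        · intro h C hC
          have := h C (mem_filter.mp hC).2
          rw [Finset.nonempty_iff_ne_empty] at this
          exact this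
      rw [if_congr hiff rfl rfl]
    rw [Finset.sum_congr rfl step2, ← hLHS]
  · -- DNF part
    have hA : (∅ : Finset (Fin (k + 1))) ∉
        Finset.univ.filter (fun C => IsPrimeImplicant φ C) := by
      simp only [Finset.mem_filter]
      rintro ⟨-, h⟩
      exact empty_not_prime_implicant hmono hnd h
    rw [dnf_eq φ, mobius_weighted _ hA (fun x => t ^ x.card)]
    have step1 : ∀ s ∈ (Finset.univ.filter (fun C => IsPrimeImplicant φ C)).powerset,
        (-1 : ℝ) ^ s.card * t ^ (s.sup id).card
        = ∑ ν ∈ (Finset.univ : Finset (Finset (Fin (k + 1)))),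
            (if s.sup id ⊆ ν then
              (-1 : ℝ) ^ s.card * (t ^ ν.card * (1 - t) ^ (k + 1 - ν.card)) else 0) := by
      intro s _
      rw [← sumW_superset t (s.sup id), Finset.mul_sum, Finset.sum_filter]
    rw [Finset.sum_congr rfl step1, Finset.sum_comm]
    have step2 : ∀ ν ∈ (Finset.univ : Finset (Finset (Fin (k + 1)))),
        ∑ s ∈ (Finset.univ.filter (fun C => IsPrimeImplicant φ C)).powerset,
            (if s.sup id ⊆ ν then
              (-1 : ℝ) ^ s.card * (t ^ ν.card * (1 - t) ^ (k + 1 - ν.card)) else 0)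
        = (if φ ν = true then (0 : ℝ) else 1)
            * (t ^ ν.card * (1 - t) ^ (k + 1 - ν.card)) := by
      intro ν _
      rw [← Finset.sum_filter, powerset_filter_sup_subset, ← Finset.sum_mul,
        sum_powerset_neg_one_real]
      congr 1
      have hiff : ((Finset.univ.filter (fun C => IsPrimeImplicant φ C)).filter
          (fun C => C ⊆ ν) = ∅) ↔ ¬ φ ν = true := by
        rw [Finset.filter_eq_empty_iff, phi_iff_implicants hmono]
        constructor
        · rintro h ⟨C, hC, hsub⟩
          exact h (mem_filter.mpr ⟨mem_univ C, hC⟩) hsub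
        · intro h C hC hsub
          exact h ⟨C, (mem_filter.mp hC).2, hsub⟩
      rw [show (if ((Finset.univ.filter (fun C => IsPrimeImplicant φ C)).filter
            (fun C => C ⊆ ν) = ∅) then (1 : ℝ) else 0)
          = if φ ν = true then (0 : ℝ) else 1 by
        by_cases hb : φ ν = true
        · rw [if_pos hb, if_neg (fun hc => (hiff.mp hc) hb)]
        · rw [if_neg hb, if_pos (hiff.mpr hb)]]
    rw [Finset.sum_congr rfl step2, hLHS]
    have hsum : (∑ ν : Finset (Fin (k + 1)),
          (if φ ν = true then (1 : ℝ) else 0) * (t ^ ν.card * (1 - t) ^ (k + 1 - ν.card)))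
        + (∑ ν : Finset (Fin (k + 1)),
          (if φ ν = true then (0 : ℝ) else 1) * (t ^ ν.card * (1 - t) ^ (k + 1 - ν.card)))
        = 1 := by
      rw [← Finset.sum_add_distrib]
      rw [Finset.sum_congr rfl (fun ν _ => ?_), sumW_all (k := k) t]
      by_cases hb : φ ν = true <;> simp [hb]
    linarith
end

section
/- Let k ≥ 1 and let φ be a Boolean function on V = {0,...,k}. Then φ is fragmentable if and only if eul(φ) = 0. -/
open scoped Classical

/-- A Boolean function is degenerate if there is a variable on which it does not depend. -/
def Degenerate (k : ℕ) (φ : Finset (Fin (k + 1)) → Bool) : Prop :=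
  ∃ l : Fin (k + 1), ∀ ν, φ ν = φ (flipV ν l)

/-- Fragmentable Boolean functions: the smallest class of Boolean functions on `V` containing
all degenerate functions and closed under negation and under disjunction of two disjoint
members of the class. -/
inductive Fragmentable (k : ℕ) : (Finset (Fin (k + 1)) → Bool) → Prop
  | degen (φ) (h : Degenerate k φ) : Fragmentable k φ
  | neg (φ) (h : Fragmentable k φ) : Fragmentable k (fun ν => !(φ ν))
  | disj (φ ψ) (hφ : Fragmentable k φ) (hψ : Fragmentable k ψ)
      (hdisj : ∀ ν, ¬(φ ν = true ∧ ψ ν = true)) :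
      Fragmentable k (fun ν => φ ν || ψ ν)

open scoped symmDiff

namespace StmtAux

variable {k : ℕ}

/-! ### Basic facts about `flipV` -/

lemma flipV_symmDiff (ν : Finset (Fin (k + 1))) (l : Fin (k + 1)) :
    flipV ν l = ν ∆ {l} := by
  ext a
  by_cases h : l ∈ ν <;> by_cases ha : a = l <;>
    simp [flipV, h, ha, Finset.mem_symmDiff]

lemma flipV_flipV (ν : Finset (Fin (k + 1))) (l : Fin (k + 1)) :
    flipV (flipV ν l) l = ν := by
  rw [flipV_symmDiff, flipV_symmDiff, symmDiff_symmDiff_cancel_right]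

lemma pow_card_flipV (ν : Finset (Fin (k + 1))) (l : Fin (k + 1)) :
    (-1 : ℤ) ^ (flipV ν l).card = -(-1 : ℤ) ^ ν.card := by
  unfold flipV
  split
  · rename_i h
    rw [Finset.card_erase_of_mem h]
    have h1 : ν.card - 1 + 1 = ν.card :=
      Nat.succ_pred_eq_of_pos (Finset.card_pos.2 ⟨l, h⟩)
    conv_rhs => rw [← h1]
    rw [pow_succ]; ring
  · rename_i h
    rw [Finset.card_insert_of_notMem h, pow_succ]; ring

lemma flipV_ne (ν : Finset (Fin (k + 1))) (l : Fin (k + 1)) : flipV ν l ≠ ν := by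
  intro h
  have h2 := pow_card_flipV ν l
  rw [h] at h2
  have h3 : (-1 : ℤ) ^ ν.card ≠ 0 := pow_ne_zero _ (by norm_num)
  apply h3
  linarith

lemma flipV_symmDiff_left (A B : Finset (Fin (k + 1))) (l : Fin (k + 1)) :
    (flipV A l) ∆ B = flipV (A ∆ B) l := by
  rw [flipV_symmDiff, flipV_symmDiff, symmDiff_assoc, symmDiff_comm ({l} : Finset (Fin (k+1))) B,
    ← symmDiff_assoc]

lemma flipV_of_mem {S : Finset (Fin (k + 1))} {l : Fin (k + 1)} (h : l ∈ S) :
    flipV S l = S.erase l := by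
  simp [flipV, h]

/-! ### Parity and `symmDiff` -/

lemma card_symmDiff_add (A B : Finset (Fin (k + 1))) :
    (A ∆ B).card + 2 * (A ∩ B).card = A.card + B.card := by
  have h1 : A ∆ B = (A \ B) ∪ (B \ A) := rfl
  have h2 : Disjoint (A \ B) (B \ A) :=
    disjoint_sdiff_sdiff
  have h3 := Finset.card_sdiff_add_card_inter A B
  have h4 := Finset.card_sdiff_add_card_inter B A
  rw [Finset.inter_comm] at h4
  rw [h1, Finset.card_union_of_disjoint h2]
  omega

lemma pow_card_symmDiff (A B : Finset (Fin (k + 1))) :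
    (-1 : ℤ) ^ A.card = (-1) ^ ((A ∆ B).card) * (-1) ^ B.card := by
  have hc := card_symmDiff_add A B
  have h1 : ((-1 : ℤ) ^ B.card) * ((-1) ^ B.card) = 1 := by
    rw [← pow_add]
    exact Even.neg_one_pow ⟨B.card, rfl⟩
  have h2 : ((-1 : ℤ)) ^ (A.card + B.card) = (-1) ^ ((A ∆ B).card + 2 * (A ∩ B).card) := by
    rw [hc]
  calc (-1 : ℤ) ^ A.card
      = (-1) ^ A.card * (((-1) ^ B.card) * ((-1) ^ B.card)) := by rw [h1, mul_one]
    _ = (-1) ^ (A.card + B.card) * (-1) ^ B.card := by rw [pow_add]; ring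
    _ = (-1) ^ ((A ∆ B).card + 2 * (A ∩ B).card) * (-1) ^ B.card := by rw [h2]
    _ = (-1) ^ ((A ∆ B).card) * (-1) ^ B.card := by
        rw [pow_add, pow_mul]
        norm_num

/-! ### Indicator functions and fragmentable sets -/

/-- Indicator function of a set of valuations. -/
def indF (S : Finset (Finset (Fin (k + 1)))) : Finset (Fin (k + 1)) → Bool :=
  fun ν => if ν ∈ S then true else false

lemma indF_eq_true {S : Finset (Finset (Fin (k + 1)))} {ν : Finset (Fin (k + 1))} :
    indF S ν = true ↔ ν ∈ S := by
  unfold indF; split <;> simp_all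

/-- A set of valuations is fragmentable if its indicator function is. -/
def Frag (k : ℕ) (S : Finset (Finset (Fin (k + 1)))) : Prop := Fragmentable k (indF S)

lemma fragmentable_ext {φ ψ : Finset (Fin (k + 1)) → Bool} (h : ∀ ν, φ ν = ψ ν)
    (hf : Fragmentable k φ) : Fragmentable k ψ := by
  rwa [show φ = ψ from funext h] at hf

lemma frag_of_eq {S T : Finset (Finset (Fin (k + 1)))} (h : S = T) (hf : Frag k S) :
    Frag k T := h ▸ hf

lemma frag_empty : Frag k (∅ : Finset (Finset (Fin (k + 1)))) := by
  refine Fragmentable.degen _ ⟨0, fun ν => ?_⟩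
  simp [indF]

lemma frag_pair (A : Finset (Fin (k + 1))) (l : Fin (k + 1)) :
    Frag k ({A, flipV A l} : Finset (Finset (Fin (k + 1)))) := by
  refine Fragmentable.degen _ ⟨l, fun ν => ?_⟩
  have key : ∀ μ : Finset (Fin (k + 1)), μ ∈ ({A, flipV A l} : Finset (Finset (Fin (k + 1)))) →
      flipV μ l ∈ ({A, flipV A l} : Finset (Finset (Fin (k + 1)))) := by
    intro μ hμ
    rcases Finset.mem_insert.1 hμ with rfl | hμ
    · exact Finset.mem_insert_of_mem (Finset.mem_singleton_self _)
    · rw [Finset.mem_singleton] at hμ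
      subst hμ
      rw [flipV_flipV]
      exact Finset.mem_insert_self _ _
  have hiff : ν ∈ ({A, flipV A l} : Finset (Finset (Fin (k + 1)))) ↔
      flipV ν l ∈ ({A, flipV A l} : Finset (Finset (Fin (k + 1)))) := by
    constructor
    · exact key ν
    · intro h
      have := key _ h
      rwa [flipV_flipV] at this
  unfold indF
  split <;> split <;> simp_all

lemma frag_union {S T : Finset (Finset (Fin (k + 1)))} (hS : Frag k S) (hT : Frag k T)
    (h : Disjoint S T) : Frag k (S ∪ T) := by
  have := Fragmentable.disj _ _ hS hT (by
    intro ν ⟨h1, h2⟩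
    rw [indF_eq_true] at h1 h2
    exact Finset.disjoint_left.1 h h1 h2)
  refine fragmentable_ext (fun ν => ?_) this
  by_cases hν : ν ∈ S <;> by_cases hν' : ν ∈ T <;>
    simp [indF, hν, hν', Finset.mem_union]

lemma frag_compl {S : Finset (Finset (Fin (k + 1)))} (hS : Frag k S) :
    Frag k (Finset.univ \ S) := by
  have := Fragmentable.neg _ hS
  refine fragmentable_ext (fun ν => ?_) this
  by_cases hν : ν ∈ S <;> simp [indF, hν]

lemma frag_sdiff {S T : Finset (Finset (Fin (k + 1)))} (hS : Frag k S) (hT : Frag k T)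
    (h : T ⊆ S) : Frag k (S \ T) := by
  have h1 : Disjoint (Finset.univ \ S) T := by
    rw [Finset.disjoint_left]
    intro a ha hat
    exact (Finset.mem_sdiff.1 ha).2 (h hat)
  have h2 := frag_compl (frag_union (frag_compl hS) hT h1)
  refine frag_of_eq ?_ h2
  ext a
  simp only [Finset.mem_sdiff, Finset.mem_union, Finset.mem_univ, true_and]
  tauto

/-! ### Euler characteristic on sets -/

/-- Euler characteristic of a set of valuations. -/
def eulS (S : Finset (Finset (Fin (k + 1)))) : ℤ := ∑ ν ∈ S, (-1 : ℤ) ^ ν.card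

lemma eul_eq (φ : Finset (Fin (k + 1)) → Bool) : eul φ = eulS (satSet φ) := rfl

lemma satSet_indF (S : Finset (Finset (Fin (k + 1)))) : satSet (indF S) = S := by
  ext ν
  simp only [satSet, Finset.mem_filter, Finset.mem_univ, true_and]
  exact indF_eq_true

lemma eulS_union {S T : Finset (Finset (Fin (k + 1)))} (h : Disjoint S T) :
    eulS (S ∪ T) = eulS S + eulS T := Finset.sum_union h

lemma eulS_sdiff {S T : Finset (Finset (Fin (k + 1)))} (h : T ⊆ S) :
    eulS (S \ T) = eulS S - eulS T := by
  have := Finset.sum_sdiff (f := fun ν : Finset (Fin (k + 1)) => (-1 : ℤ) ^ ν.card) h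
  unfold eulS
  linarith

lemma eulS_univ : eulS (Finset.univ : Finset (Finset (Fin (k + 1)))) = 0 := by
  unfold eulS
  rw [← Finset.powerset_univ, Finset.sum_powerset_neg_one_pow_card]
  rw [if_neg]
  intro h
  have : (0 : Fin (k + 1)) ∈ (Finset.univ : Finset (Fin (k + 1))) := Finset.mem_univ _
  rw [h] at this
  simp at this

lemma eulS_pair (A : Finset (Fin (k + 1))) (l : Fin (k + 1)) :
    eulS ({A, flipV A l} : Finset (Finset (Fin (k + 1)))) = 0 := by
  unfold eulS
  rw [Finset.sum_pair (flipV_ne A l).symm, pow_card_flipV]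
  ring

/-! ### Backward direction: inner induction on the distance -/

lemma inner (n : ℕ)
    (hn : ∀ T : Finset (Finset (Fin (k + 1))), T.card < n → eulS T = 0 → Frag k T) :
    ∀ d (S : Finset (Finset (Fin (k + 1)))) (A B : Finset (Fin (k + 1))),
      S.card = n → A ∈ S → B ∈ S → (A ∆ B).card = d → Odd d → eulS S = 0 → Frag k S := by
  intro d
  induction d using Nat.strong_induction_on with
  | _ d ih =>
  intro S A B hcard hA hB hd hodd heul
  have hd1 : 1 ≤ d := by
    rcases hodd with ⟨c, hc⟩; omega
  have hAB : A ≠ B := by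
    intro h
    rw [h, symmDiff_self] at hd
    simp at hd
    omega
  by_cases hdone : d = 1
  · -- adjacent pair: extract it
    subst hdone
    obtain ⟨l, hl⟩ := Finset.card_eq_one.1 hd
    have hBA : B = flipV A l := by
      rw [flipV_symmDiff, ← hl, symmDiff_symmDiff_cancel_left]
    have hpair : ({A, B} : Finset (Finset (Fin (k + 1)))) ⊆ S := by
      intro x hx
      rcases Finset.mem_insert.1 hx with rfl | hx
      · exact hA
      · rw [Finset.mem_singleton] at hx; subst hx; exact hB
    have hpairfrag : Frag k ({A, B} : Finset (Finset (Fin (k + 1)))) := by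
      rw [hBA]; exact frag_pair A l
    have hpaireul : eulS ({A, B} : Finset (Finset (Fin (k + 1)))) = 0 := by
      rw [hBA]; exact eulS_pair A l
    have hcard2 : ({A, B} : Finset (Finset (Fin (k + 1)))).card = 2 :=
      Finset.card_pair hAB
    have hrest : Frag k (S \ {A, B}) := by
      apply hn
      · rw [Finset.card_sdiff_of_subset hpair, hcard2, hcard]
        have : 1 ≤ n := by rw [← hcard]; exact Finset.card_pos.2 ⟨A, hA⟩
        omega
      · rw [eulS_sdiff hpair, heul, hpaireul]; ring
    refine frag_of_eq ?_ (frag_union hrest hpairfrag ?_)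
    · exact Finset.sdiff_union_of_subset hpair
    · exact Finset.sdiff_disjoint
  · -- d ≥ 3
    have hd3 : 3 ≤ d := by
      rcases hodd with ⟨c, hc⟩; omega
    obtain ⟨l, hl⟩ : (A ∆ B).Nonempty := Finset.card_pos.1 (by omega)
    set A' := flipV A l with hA'def
    have hA'B : A' ∆ B = (A ∆ B).erase l := by
      rw [hA'def, flipV_symmDiff_left, flipV_of_mem hl]
    have hA'Bcard : (A' ∆ B).card = d - 1 := by
      rw [hA'B, Finset.card_erase_of_mem hl, hd]
    by_cases hA'S : A' ∈ S
    · -- A and A' are an adjacent pair in S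
      refine ih 1 (by omega) S A A' hcard hA hA'S ?_ ⟨0, by norm_num⟩ heul
      rw [hA'def, flipV_symmDiff, symmDiff_symmDiff_cancel_left, Finset.card_singleton]
    · obtain ⟨m, hm⟩ : (A' ∆ B).Nonempty := Finset.card_pos.1 (by omega)
      have hml : m ≠ l := by
        intro h
        rw [h, hA'B] at hm
        exact Finset.notMem_erase _ _ hm
      set A'' := flipV A' m with hA''def
      have hA''B : (A'' ∆ B).card = d - 2 := by
        rw [hA''def, flipV_symmDiff_left, flipV_of_mem hm, Finset.card_erase_of_mem hm,
          hA'Bcard]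
        omega
      have hoddd2 : Odd (d - 2) := by
        rcases hodd with ⟨c, hc⟩; exact ⟨c - 1, by omega⟩
      by_cases hA''S : A'' ∈ S
      · exact ih (d - 2) (by omega) S A'' B hcard hA''S hB hA''B hoddd2 heul
      · -- slide A to A''
        have hA''A : A'' ≠ A := by
          intro h
          rw [h, hd] at hA''B
          omega
        have hA''B' : A'' ≠ B := by
          intro h
          rw [h, symmDiff_self] at hA''B
          simp at hA''B
          omega
        have hA'A : A' ≠ A := flipV_ne A l
        have hA'A'' : A' ≠ A'' := (flipV_ne A' m).symm
        -- parity of A'' equals parity of A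
        have hparAA'' : (-1 : ℤ) ^ A''.card = (-1) ^ A.card := by
          have e1 := pow_card_symmDiff A B
          have e2 := pow_card_symmDiff A'' B
          rw [hd] at e1
          rw [hA''B] at e2
          have : ((-1 : ℤ)) ^ d = (-1) ^ (d - 2) := by
            have hd' : d = (d - 2) + 2 := by omega
            rw [hd', pow_add]
            norm_num
          rw [e1, e2, this]
        set S2 := insert A'' (S.erase A) with hS2def
        have hA''nerase : A'' ∉ S.erase A := fun h => hA''S (Finset.mem_of_mem_erase h)
        have hS2card : S2.card = n := by
          rw [hS2def, Finset.card_insert_of_notMem hA''nerase,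
            Finset.card_erase_of_mem hA, hcard]
          have : 1 ≤ n := by rw [← hcard]; exact Finset.card_pos.2 ⟨A, hA⟩
          omega
        have heul2 : eulS S2 = 0 := by
          rw [hS2def]
          unfold eulS
          rw [Finset.sum_insert hA''nerase, hparAA'']
          have h5 := Finset.add_sum_erase S (fun ν : Finset (Fin (k + 1)) => (-1 : ℤ) ^ ν.card) hA
          unfold eulS at heul
          linarith
        have hBS2 : B ∈ S2 := by
          rw [hS2def]
          exact Finset.mem_insert_of_mem (Finset.mem_erase.2 ⟨fun h => hAB h.symm, hB⟩)
        have hA''S2 : A'' ∈ S2 := Finset.mem_insert_self _ _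
        have hfragS2 : Frag k S2 := ih (d - 2) (by omega) S2 A'' B hS2card hA''S2 hBS2 hA''B
          hoddd2 heul2
        -- pair1 = {A', A''}, pair2 = {A, A'}
        have hpair1 : Frag k ({A', A''} : Finset (Finset (Fin (k + 1)))) := by
          rw [hA''def]; exact frag_pair A' m
        have hpair2 : Frag k ({A, A'} : Finset (Finset (Fin (k + 1)))) := by
          rw [hA'def]; exact frag_pair A l
        have hdisj2 : Disjoint S2 ({A, A'} : Finset (Finset (Fin (k + 1)))) := by
          rw [Finset.disjoint_right]
          intro x hx
          rcases Finset.mem_insert.1 hx with rfl | hx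
          · rw [hS2def]
            intro h
            rcases Finset.mem_insert.1 h with h | h
            · exact hA''A h.symm
            · exact (Finset.mem_erase.1 h).1 rfl
          · rw [Finset.mem_singleton] at hx; subst hx
            rw [hS2def]
            intro h
            rcases Finset.mem_insert.1 h with h | h
            · exact hA'A'' h
            · exact hA'S (Finset.mem_of_mem_erase h)
        have hU : Frag k (S2 ∪ {A, A'}) := frag_union hfragS2 hpair2 hdisj2
        have hEq : S2 ∪ ({A, A'} : Finset (Finset (Fin (k + 1)))) =
            S ∪ ({A', A''} : Finset (Finset (Fin (k + 1)))) := by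
          rw [hS2def]
          ext x
          simp only [Finset.mem_union, Finset.mem_insert, Finset.mem_erase,
            Finset.mem_singleton]
          constructor
          · rintro ((rfl | ⟨hxA, hxS⟩) | (rfl | rfl))
            · exact Or.inr (Or.inr rfl)
            · exact Or.inl hxS
            · exact Or.inl hA
            · exact Or.inr (Or.inl rfl)
          · rintro (hxS | (rfl | rfl))
            · by_cases hxA : x = A
              · exact Or.inr (Or.inl hxA)
              · exact Or.inl (Or.inr ⟨hxA, hxS⟩)
            · exact Or.inr (Or.inr rfl)
            · exact Or.inl (Or.inl rfl)
        have hU' : Frag k (S ∪ ({A', A''} : Finset (Finset (Fin (k + 1))))) :=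
          frag_of_eq hEq hU
        have hfinal : Frag k ((S ∪ ({A', A''} : Finset (Finset (Fin (k + 1))))) \ {A', A''}) :=
          frag_sdiff hU' hpair1 Finset.subset_union_right
        refine frag_of_eq ?_ hfinal
        have hdj : Disjoint S ({A', A''} : Finset (Finset (Fin (k + 1)))) := by
          rw [Finset.disjoint_right]
          intro x hx hxS
          rcases Finset.mem_insert.1 hx with rfl | hx
          · exact hA'S hxS
          · rw [Finset.mem_singleton] at hx; subst hx; exact hA''S hxS
        rw [Finset.union_sdiff_right, Finset.sdiff_eq_self_iff_disjoint.2 hdj]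

lemma backward : ∀ (n : ℕ) (S : Finset (Finset (Fin (k + 1)))),
    S.card ≤ n → eulS S = 0 → Frag k S := by
  intro n
  induction n with
  | zero =>
    intro S h _
    have : S = ∅ := Finset.card_eq_zero.1 (Nat.le_zero.1 h)
    subst this
    exact frag_empty
  | succ n ihn =>
    intro S hcard heul
    rcases Finset.eq_empty_or_nonempty S with rfl | ⟨A, hA⟩
    · exact frag_empty
    by_cases hall : ∀ B ∈ S, (-1 : ℤ) ^ B.card = (-1) ^ A.card
    · exfalso
      have h1 : eulS S = S.card • ((-1 : ℤ) ^ A.card) := by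
        unfold eulS
        rw [Finset.sum_congr rfl hall, Finset.sum_const]
      rw [heul] at h1
      have h2 : (-1 : ℤ) ^ A.card ≠ 0 := pow_ne_zero _ (by norm_num)
      have h3 : (S.card : ℤ) * (-1) ^ A.card = 0 := by
        rw [nsmul_eq_mul] at h1; linarith
      rcases mul_eq_zero.1 h3 with h | h
      · have : S.card = 0 := by exact_mod_cast h
        rw [Finset.card_eq_zero] at this
        subst this
        simp at hA
      · exact h2 h
    · push_neg at hall
      obtain ⟨B, hB, hBne⟩ := hall
      have hodd : Odd ((A ∆ B).card) := by
        rcases Nat.even_or_odd ((A ∆ B).card) with he | ho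
        · exfalso
          apply hBne
          have := pow_card_symmDiff A B
          rw [Even.neg_one_pow he, one_mul] at this
          exact this.symm
        · exact ho
      exact inner S.card
        (fun T hT hTe => ihn T (by omega) hTe)
        ((A ∆ B).card) S A B rfl hA hB rfl hodd heul

/-! ### Forward direction -/

lemma forward {φ : Finset (Fin (k + 1)) → Bool} (h : Fragmentable k φ) : eul φ = 0 := by
  induction h with
  | degen φ h =>
    obtain ⟨l, hl⟩ := h
    refine Finset.sum_involution (fun ν _ => flipV ν l) ?_ ?_ ?_ ?_
    · intro ν _
      rw [pow_card_flipV]; ring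
    · intro ν _ _
      exact flipV_ne ν l
    · intro ν hν
      simp only [satSet, Finset.mem_filter, Finset.mem_univ, true_and] at hν ⊢
      rw [← hl]; exact hν
    · intro ν _
      exact flipV_flipV ν l
  | neg φ h ih =>
    have hsat : satSet (fun ν => !(φ ν)) = Finset.univ \ satSet φ := by
      ext ν
      simp [satSet]
    rw [eul_eq, hsat, eulS_sdiff (Finset.subset_univ _), eulS_univ, ← eul_eq, ih]
    ring
  | disj φ ψ hφ hψ hdisj ihφ ihψ =>
    have hsat : satSet (fun ν => φ ν || ψ ν) = satSet φ ∪ satSet ψ := by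
      ext ν
      simp [satSet]
    have hdis : Disjoint (satSet φ) (satSet ψ) := by
      rw [Finset.disjoint_left]
      intro ν h1 h2
      simp only [satSet, Finset.mem_filter, Finset.mem_univ, true_and] at h1 h2
      exact hdisj ν ⟨h1, h2⟩
    rw [eul_eq, hsat, eulS_union hdis, ← eul_eq, ← eul_eq, ihφ, ihψ]
    ring

end StmtAux

/-- `φ` is fragmentable if and only if `eul(φ) = 0`. -/
theorem stmt4 (k : ℕ) (hk : 1 ≤ k) (φ : Finset (Fin (k + 1)) → Bool) :
    Fragmentable k φ ↔ eul φ = 0 := by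
  constructor
  · exact StmtAux.forward
  · intro h
    have hfrag : StmtAux.Frag k (satSet φ) :=
      StmtAux.backward (satSet φ).card (satSet φ) le_rfl (by rw [← StmtAux.eul_eq, h])
    refine StmtAux.fragmentable_ext (fun ν => ?_) hfrag
    by_cases hφ : φ ν = true
    · have : ν ∈ satSet φ := by simp [satSet, hφ]
      simp [StmtAux.indF, this, hφ]
    · have h2 : φ ν = false := by simpa using hφ
      have h3 : ν ∉ satSet φ := by simp [satSet, h2]
      simp [StmtAux.indF, h3, h2]
end

section
/- Let k ≥ 1 and let φ be a Boolean function on V = {0,...,k}. If φ ≃ ⊥ (where ⊥ is the Boolean function with no satisfying valuation), then φ is fragmentable. -/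
open scoped Classical

/-- `φ →+ φ'`: there are `ν, l` with `ν ∉ sat(φ)`, `ν^(l) ∉ sat(φ)` and
`sat(φ') = sat(φ) ∪ {ν, ν^(l)}`. -/
def StepPlus (k : ℕ) (φ φ' : Finset (Fin (k + 1)) → Bool) : Prop :=
  ∃ (ν : Finset (Fin (k + 1))) (l : Fin (k + 1)),
    φ ν = false ∧ φ (flipV ν l) = false ∧
    ∀ μ, (φ' μ = true ↔ φ μ = true ∨ μ = ν ∨ μ = flipV ν l)

/-- `φ →− φ'`: remove two adjacent satisfying valuations. -/
def StepMinus (k : ℕ) (φ φ' : Finset (Fin (k + 1)) → Bool) : Prop :=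
  StepPlus k φ' φ

/-- `φ →± φ'`. -/
def StepPM (k : ℕ) (φ φ' : Finset (Fin (k + 1)) → Bool) : Prop :=
  StepPlus k φ φ' ∨ StepMinus k φ φ'

/-- The relation `≃` (equivalently `→±*`): the reflexive transitive closure of `→±`. -/
def EquivPM (k : ℕ) (φ φ' : Finset (Fin (k + 1)) → Bool) : Prop :=
  Relation.ReflTransGen (StepPM k) φ φ'

lemma flipV_flipV {k : ℕ} (ν : Finset (Fin (k + 1))) (l : Fin (k + 1)) :
    flipV (flipV ν l) l = ν := by
  unfold flipV
  by_cases h : l ∈ ν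
  · simp [h, Finset.insert_erase h]
  · simp [h, Finset.erase_insert h]

lemma flipV_eq_iff {k : ℕ} {μ ν : Finset (Fin (k + 1))} {l : Fin (k + 1)} :
    flipV μ l = ν ↔ μ = flipV ν l := by
  constructor
  · rintro rfl; rw [flipV_flipV]
  · rintro rfl; rw [flipV_flipV]

lemma chi_degen {k : ℕ} (ν : Finset (Fin (k + 1))) (l : Fin (k + 1)) :
    Degenerate k (fun μ => decide (μ = ν ∨ μ = flipV ν l)) := by
  refine ⟨l, fun μ => ?_⟩
  simp only [decide_eq_decide, flipV_eq_iff, flipV_flipV]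
  tauto

lemma step_frag_fwd {k : ℕ} {φ φ' : Finset (Fin (k + 1)) → Bool}
    (h : StepPlus k φ φ') (hf : Fragmentable k φ) : Fragmentable k φ' := by
  obtain ⟨ν, l, h1, h2, h3⟩ := h
  have key : φ' = fun μ => φ μ || decide (μ = ν ∨ μ = flipV ν l) := by
    funext μ
    rw [Bool.eq_iff_iff]
    simp [h3 μ, or_assoc]
  rw [key]
  refine Fragmentable.disj _ _ hf (Fragmentable.degen _ (chi_degen ν l)) ?_
  rintro μ ⟨hμ, hd⟩
  rcases of_decide_eq_true hd with rfl | rfl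
  · rw [h1] at hμ; exact Bool.false_ne_true hμ
  · rw [h2] at hμ; exact Bool.false_ne_true hμ

lemma step_frag_rev {k : ℕ} {φ φ' : Finset (Fin (k + 1)) → Bool}
    (h : StepPlus k φ φ') (hf : Fragmentable k φ') : Fragmentable k φ := by
  obtain ⟨ν, l, h1, h2, h3⟩ := h
  have key : φ = fun μ => !((!(φ' μ)) || decide (μ = ν ∨ μ = flipV ν l)) := by
    funext μ
    rw [Bool.eq_iff_iff]
    simp only [Bool.not_eq_true', Bool.or_eq_false_iff, Bool.not_eq_false',
      decide_eq_false_iff_not, h3 μ]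
    constructor
    · intro hμ
      refine ⟨Or.inl hμ, ?_⟩
      rintro (rfl | rfl)
      · rw [h1] at hμ; exact Bool.false_ne_true hμ
      · rw [h2] at hμ; exact Bool.false_ne_true hμ
    · rintro ⟨(hμ | hμ), hn⟩
      · exact hμ
      · exact absurd hμ hn
  rw [key]
  have hdisj : ∀ μ, ¬((!(φ' μ)) = true ∧ decide (μ = ν ∨ μ = flipV ν l) = true) := by
    rintro μ ⟨hμ, hd⟩
    rw [Bool.not_eq_true'] at hμ
    have := (h3 μ).mpr (Or.inr (of_decide_eq_true hd))
    rw [hμ] at this; exact Bool.false_ne_true this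
  exact Fragmentable.neg _
    (Fragmentable.disj _ _ (Fragmentable.neg _ hf)
      (Fragmentable.degen _ (chi_degen ν l)) hdisj)

/-- if `φ ≃ ⊥` then `φ` is fragmentable. -/
theorem stmt5 (k : ℕ) (hk : 1 ≤ k) (φ : Finset (Fin (k + 1)) → Bool)
    (h : EquivPM k φ (fun _ => false)) : Fragmentable k φ := by
  induction h using Relation.ReflTransGen.head_induction_on with
  | refl => exact Fragmentable.degen _ ⟨0, fun _ => rfl⟩
  | head hstep _ ih =>
    rcases hstep with hs | hs
    · exact step_frag_rev hs ih
    · exact step_frag_fwd hs ih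
end

section
/- Let k ≥ 1 and let φ be a Boolean function on V = {0,...,k}. If eul(φ) = 0, then φ ≃ ⊥, where ⊥ is the Boolean function with no satisfying valuation. -/
open scoped Classical symmDiff

lemma mem_flipV {k : ℕ} {s : Finset (Fin (k+1))} {l a : Fin (k+1)} :
    a ∈ flipV s l ↔ (if a = l then l ∉ s else a ∈ s) := by
  unfold flipV
  by_cases h : l ∈ s <;> by_cases h' : a = l <;>
    simp [h, h', Finset.mem_erase, Finset.mem_insert]

lemma mem_flipV_self {k : ℕ} {s : Finset (Fin (k+1))} {l : Fin (k+1)} :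
    l ∈ flipV s l ↔ l ∉ s := by simp [mem_flipV]

lemma flipV_ne {k : ℕ} (s : Finset (Fin (k+1))) (l : Fin (k+1)) : flipV s l ≠ s := by
  intro h
  by_cases hl : l ∈ s
  · have := mem_flipV_self (s := s) (l := l); rw [h] at *; tauto
  · have := mem_flipV_self (s := s) (l := l); rw [h] at *; tauto

lemma flipV_symmDiff {k : ℕ} (ν μ : Finset (Fin (k+1))) (l : Fin (k+1)) :
    (flipV ν l) ∆ μ = flipV (ν ∆ μ) l := by
  ext a
  simp only [Finset.mem_symmDiff, mem_flipV]
  by_cases h : a = l <;> simp [h, Finset.mem_symmDiff] <;> tauto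

lemma card_flipV_mem {k : ℕ} {s : Finset (Fin (k+1))} {l : Fin (k+1)} (h : l ∈ s) :
    (flipV s l).card + 1 = s.card := by
  unfold flipV; rw [if_pos h]; exact Finset.card_erase_add_one h

lemma card_flipV_not_mem {k : ℕ} {s : Finset (Fin (k+1))} {l : Fin (k+1)} (h : l ∉ s) :
    (flipV s l).card = s.card + 1 := by
  unfold flipV; rw [if_neg h]; exact Finset.card_insert_of_notMem h

lemma pow_flipV {k : ℕ} (s : Finset (Fin (k+1))) (l : Fin (k+1)) :
    ((-1 : ℤ)) ^ (flipV s l).card = -(-1) ^ s.card := by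
  by_cases h : l ∈ s
  · have := card_flipV_mem h
    rw [← this, pow_succ]; ring
  · rw [card_flipV_not_mem h, pow_succ]; ring

lemma mem_satSet {k : ℕ} {φ : Finset (Fin (k+1)) → Bool} {ν : Finset (Fin (k+1))} :
    ν ∈ satSet φ ↔ φ ν = true := by simp [satSet]

lemma sign_symmDiff {k : ℕ} : ∀ d (ν μ : Finset (Fin (k+1))), (ν ∆ μ).card = d →
    ((-1 : ℤ)) ^ (ν ∆ μ).card = (-1) ^ ν.card * (-1) ^ μ.card := by
  intro d
  induction d using Nat.strong_induction_on with
  | _ d ih =>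
    intro ν μ hd
    rcases Nat.eq_zero_or_pos d with h0 | hpos
    · subst h0
      have : ν ∆ μ = ∅ := Finset.card_eq_zero.mp hd
      have hνμ : ν = μ := by
        have := symmDiff_eq_bot.mp (by exact_mod_cast this)
        exact this
      subst hνμ
      rw [this]
      simp [← pow_add, ← two_mul]
    · have hne : (ν ∆ μ).Nonempty := Finset.card_pos.mp (hd ▸ hpos)
      obtain ⟨l, hl⟩ := hne
      have hcard : ((flipV ν l) ∆ μ).card = d - 1 := by
        rw [flipV_symmDiff]
        have := card_flipV_mem hl
        omega
      have := ih (d-1) (by omega) (flipV ν l) μ hcard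
      rw [flipV_symmDiff] at this
      have h1 : ((-1:ℤ)) ^ (flipV (ν ∆ μ) l).card = -(-1) ^ (ν ∆ μ).card := pow_flipV _ _
      have h2 : ((-1:ℤ)) ^ (flipV ν l).card = -(-1) ^ ν.card := pow_flipV _ _
      rw [h1, h2] at this
      have : ((-1:ℤ)) ^ (ν ∆ μ).card = (-1) ^ ν.card * (-1) ^ μ.card := by linarith [this]
      exact this

lemma odd_of_sign_ne {k : ℕ} {ν μ : Finset (Fin (k+1))}
    (h : ((-1 : ℤ)) ^ ν.card ≠ (-1) ^ μ.card) : Odd (ν ∆ μ).card := by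
  have hs := sign_symmDiff (ν ∆ μ).card ν μ rfl
  rw [← Nat.not_even_iff_odd]
  intro he
  rw [he.neg_one_pow] at hs
  rcases Nat.even_or_odd ν.card with ha | ha <;> rcases Nat.even_or_odd μ.card with hb | hb <;>
    simp [ha.neg_one_pow, hb.neg_one_pow] at h hs

lemma satSet_stepPlus {k : ℕ} {φ φ' : Finset (Fin (k+1)) → Bool}
    {ν : Finset (Fin (k+1))} {l : Fin (k+1)}
    (hsat : ∀ μ, (φ' μ = true ↔ φ μ = true ∨ μ = ν ∨ μ = flipV ν l)) :
    satSet φ' = insert ν (insert (flipV ν l) (satSet φ)) := by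
  ext μ
  simp [mem_satSet, hsat μ]
  tauto

lemma eul_stepPlus {k : ℕ} {φ φ' : Finset (Fin (k+1)) → Bool}
    (h : StepPlus k φ φ') : eul φ' = eul φ := by
  obtain ⟨ν, l, h1, h2, hsat⟩ := h
  have hss := satSet_stepPlus hsat
  have hν : ν ∉ insert (flipV ν l) (satSet φ) := by
    simp [mem_satSet, h1, Ne.symm (flipV_ne ν l), (flipV_ne ν l).symm]
  have hfl : flipV ν l ∉ satSet φ := by simp [mem_satSet, h2]
  rw [eul, hss, Finset.sum_insert hν, Finset.sum_insert hfl, pow_flipV]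
  rw [eul]; ring

lemma eul_equivPM {k : ℕ} {φ φ' : Finset (Fin (k+1)) → Bool}
    (h : EquivPM k φ φ') : eul φ' = eul φ := by
  induction h with
  | refl => rfl
  | tail _ hstep ih =>
    rcases hstep with hp | hm
    · rw [eul_stepPlus hp, ih]
    · rw [← eul_stepPlus hm, ih]

lemma step_add {k : ℕ} (φ : Finset (Fin (k+1)) → Bool) (ν : Finset (Fin (k+1)))
    (l : Fin (k+1)) (h1 : φ ν = false) (h2 : φ (flipV ν l) = false) :
    StepPM k φ (fun μ => φ μ || decide (μ = ν) || decide (μ = flipV ν l)) := by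
  left
  exact ⟨ν, l, h1, h2, fun μ => by simp; tauto⟩

lemma step_remove {k : ℕ} (φ : Finset (Fin (k+1)) → Bool) (ν : Finset (Fin (k+1)))
    (l : Fin (k+1)) (h1 : φ ν = true) (h2 : φ (flipV ν l) = true) :
    StepPM k φ (fun μ => φ μ && !decide (μ = ν) && !decide (μ = flipV ν l)) := by
  right
  refine ⟨ν, l, by simp, by simp [Ne.symm (flipV_ne ν l)], fun μ => ?_⟩
  by_cases hν : μ = ν
  · subst hν; simp [h1]
  · by_cases hf : μ = flipV ν l
    · subst hf; simp [h2]
    · simp [hν, hf]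

lemma satSet_remove {k : ℕ} (φ : Finset (Fin (k+1)) → Bool) (a b : Finset (Fin (k+1))) :
    satSet (fun μ => φ μ && !decide (μ = a) && !decide (μ = b))
      = ((satSet φ).erase a).erase b := by
  ext μ
  simp [mem_satSet]
  tauto

lemma satSet_add {k : ℕ} (φ : Finset (Fin (k+1)) → Bool) (a b : Finset (Fin (k+1))) :
    satSet (fun μ => φ μ || decide (μ = a) || decide (μ = b))
      = insert a (insert b (satSet φ)) := by
  ext μ
  simp [mem_satSet]
  tauto

lemma reduce {k : ℕ} : ∀ d (φ : Finset (Fin (k+1)) → Bool) (ν μ : Finset (Fin (k+1))),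
    φ ν = true → φ μ = true → (ν ∆ μ).card = d → Odd d →
    ∃ φ', EquivPM k φ φ' ∧ (satSet φ').card + 2 = (satSet φ).card := by
  intro d
  induction d using Nat.strong_induction_on with
  | _ d ih =>
  intro φ ν μ hν hμ hd hodd
  have hd1 : 1 ≤ d := hodd.pos
  have hne : (ν ∆ μ).Nonempty := Finset.card_pos.mp (by omega)
  obtain ⟨l, hl⟩ := hne
  have hνμ : ν ≠ μ := by
    intro h; subst h; simp [Finset.mem_symmDiff] at hl
  have hcard1 : ((flipV ν l) ∆ μ).card + 1 = d := by
    rw [flipV_symmDiff, ← hd]; exact card_flipV_mem hl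
  by_cases hφp1 : φ (flipV ν l) = true
  · -- remove the pair {ν, flipV ν l}
    refine ⟨_, Relation.ReflTransGen.single (step_remove φ ν l hν hφp1), ?_⟩
    rw [satSet_remove]
    have hνs : ν ∈ satSet φ := mem_satSet.mpr hν
    have hp1s : flipV ν l ∈ (satSet φ).erase ν :=
      Finset.mem_erase.mpr ⟨flipV_ne ν l, mem_satSet.mpr hφp1⟩
    have e1 := Finset.card_erase_add_one hνs
    have e2 := Finset.card_erase_add_one hp1s
    omega
  · have hφp1' : φ (flipV ν l) = false := by
      revert hφp1; cases φ (flipV ν l) <;> simp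
    have hp1μ : flipV ν l ≠ μ := by
      intro h; rw [h, hμ] at hφp1'; exact Bool.noConfusion hφp1'
    have hne2 : ((flipV ν l) ∆ μ).Nonempty := by
      rw [Finset.nonempty_iff_ne_empty]
      intro h
      exact hp1μ (symmDiff_eq_bot.mp (by exact_mod_cast h))
    obtain ⟨l', hl'⟩ := hne2
    have hcard2 : ((flipV (flipV ν l) l') ∆ μ).card + 2 = d := by
      rw [flipV_symmDiff]
      have := card_flipV_mem hl'
      omega
    have hll' : l' ≠ l := by
      have hnl : l ∉ (flipV ν l) ∆ μ := by
        rw [flipV_symmDiff]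
        intro h
        exact (mem_flipV_self.mp h) hl
      intro h; rw [h] at hl'; exact hnl hl'
    have hp2ν : flipV (flipV ν l) l' ≠ ν := by
      intro h
      have h1 : l' ∈ flipV (flipV ν l) l' ↔ l' ∉ flipV ν l := mem_flipV_self
      have h2 : l' ∈ flipV ν l ↔ l' ∈ ν := by rw [mem_flipV]; simp [hll']
      rw [h] at h1; tauto
    have hoddd2 : Odd (d - 2) := by rw [Nat.odd_iff] at *; omega
    by_cases hφp2 : φ (flipV (flipV ν l) l') = true
    · exact ih (d-2) (by omega) φ _ μ hφp2 hμ (by omega) hoddd2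
    · have hφp2' : φ (flipV (flipV ν l) l') = false := by
        revert hφp2; cases φ (flipV (flipV ν l) l') <;> simp
      set p1 := flipV ν l with hp1def
      set p2 := flipV p1 l' with hp2def
      set φ1 := fun μ' => φ μ' || decide (μ' = p1) || decide (μ' = p2) with hφ1
      have s1 : StepPM k φ φ1 := step_add φ p1 l' hφp1' hφp2'
      have hφ1ν : φ1 ν = true := by simp [hφ1, hν]
      have hφ1p1 : φ1 p1 = true := by simp [hφ1]
      set φ2 := fun μ' => φ1 μ' && !decide (μ' = ν) && !decide (μ' = p1) with hφ2
      have s2 : StepPM k φ1 φ2 := step_remove φ1 ν l hφ1ν hφ1p1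
      have hequiv : EquivPM k φ φ2 :=
        (Relation.ReflTransGen.single s1).tail s2
      have hp2μ : p2 ≠ μ := by
        intro h; rw [h, hμ] at hφp2'; exact Bool.noConfusion hφp2'
      have hφ2p2 : φ2 p2 = true := by
        simp [hφ2, hφ1, hp2ν, (flipV_ne p1 l' : p2 ≠ p1)]; exact flipV_ne p1 l'
      have hφ2μ : φ2 μ = true := by
        simp [hφ2, hφ1, hμ, Ne.symm hνμ, Ne.symm hp1μ]
      -- card of satSet φ2 equals card of satSet φ
      have hp1ns : p1 ∉ satSet φ := by simp [mem_satSet, hφp1']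
      have hp2ns : p2 ∉ satSet φ := by simp [mem_satSet, hφp2']
      have hcardφ1 : (satSet φ1).card = (satSet φ).card + 2 := by
        rw [hφ1, satSet_add]
        rw [Finset.card_insert_of_notMem, Finset.card_insert_of_notMem hp2ns]
        simp [hp1ns, Ne.symm (flipV_ne p1 l' : p2 ≠ p1)]; exact Ne.symm (flipV_ne p1 l')
      have hνs1 : ν ∈ satSet φ1 := mem_satSet.mpr hφ1ν
      have hp1s1 : p1 ∈ (satSet φ1).erase ν :=
        Finset.mem_erase.mpr ⟨flipV_ne ν l, mem_satSet.mpr hφ1p1⟩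
      have hcardφ2 : (satSet φ2).card = (satSet φ).card := by
        rw [hφ2, satSet_remove]
        have e1 := Finset.card_erase_add_one hνs1
        have e2 := Finset.card_erase_add_one hp1s1
        omega
      obtain ⟨φ', hequiv', hcard'⟩ :=
        ih (d-2) (by omega) φ2 p2 μ hφ2p2 hφ2μ (by omega) hoddd2
      exact ⟨φ', hequiv.trans hequiv', by omega⟩

lemma main_aux {k : ℕ} : ∀ n (φ : Finset (Fin (k+1)) → Bool), (satSet φ).card = n →
    eul φ = 0 → EquivPM k φ (fun _ => false) := by
  intro n
  induction n using Nat.strong_induction_on with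
  | _ n ih =>
  intro φ hn h
  rcases Finset.eq_empty_or_nonempty (satSet φ) with he | ⟨ν0, hν0⟩
  · have hφ : φ = fun _ => false := by
      funext μ
      by_contra hb
      have hb' : φ μ = true := by revert hb; cases φ μ <;> simp
      have : μ ∈ satSet φ := mem_satSet.mpr hb'
      rw [he] at this
      simp at this
    rw [hφ]
    exact Relation.ReflTransGen.refl
  · by_cases hall : ∀ ν ∈ satSet φ, ((-1:ℤ))^ν.card = (-1)^ν0.card
    · exfalso
      have heq : eul φ = ((satSet φ).card : ℤ) * (-1)^ν0.card := by
        rw [eul, Finset.sum_congr rfl hall, Finset.sum_const, nsmul_eq_mul]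
      rw [h] at heq
      have hc : (satSet φ).card ≠ 0 := Finset.card_ne_zero_of_mem hν0
      have hc0 : ((satSet φ).card : ℤ) = 0 := by
        rcases Nat.even_or_odd ν0.card with hp | hp <;>
          rw [hp.neg_one_pow] at heq <;> linarith
      exact hc (by exact_mod_cast hc0)
    · push_neg at hall
      obtain ⟨μ0, hμ0, hsign⟩ := hall
      have hodd : Odd (μ0 ∆ ν0).card := odd_of_sign_ne hsign
      obtain ⟨φ', hequiv, hcard⟩ :=
        reduce (μ0 ∆ ν0).card φ μ0 ν0 (mem_satSet.mp hμ0) (mem_satSet.mp hν0) rfl hodd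
      have heul' : eul φ' = 0 := by rw [eul_equivPM hequiv, h]
      exact hequiv.trans (ih (satSet φ').card (by omega) φ' rfl heul')

/-- if `eul(φ) = 0` then `φ ≃ ⊥`. -/
theorem stmt10 (k : ℕ) (hk : 1 ≤ k) (φ : Finset (Fin (k + 1)) → Bool)
    (h : eul φ = 0) : EquivPM k φ (fun _ => false) := by
  exact main_aux (satSet φ).card φ rfl h
end
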